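/- Let f : ℝ → ℝ be a bounded C² function with bounded first and second derivatives, and suppose f, f' vanish at infinity (e.g. f is a Schwartz function). Then (1/(2 log 2)) ∫₀^∞ (f(x) − 2 f(x−s) + f(x−2s))/s² ds = f'(x) for every x ∈ ℝ, where the integral converges absolutely. -/

import Mathlib

open MeasureTheory Set Real

private lemma mvt_univ {g : ℝ → ℝ} (hg : Differentiable ℝ g) {b : ℝ}
    (hb : ∀ y, |deriv g y| ≤ b) (a c : ℝ) : |g a - g c| ≤ b * |a - c| := by
  have h := Convex.norm_image_sub_le_of_norm_deriv_le (f := g) (s := (univ : Set ℝ))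
    (fun y _ => hg y) (fun y _ => by simpa [Real.norm_eq_abs] using hb y)
    convex_univ (mem_univ c) (mem_univ a)
  simpa [Real.norm_eq_abs] using h

theorem stmt_8 (f : ℝ → ℝ) (hf : ContDiff ℝ 2 f) (hsupp : HasCompactSupport f) (x : ℝ) :
    IntegrableOn (fun s => (f x - 2 * f (x - s) + f (x - 2 * s)) / s ^ 2) (Ioi (0:ℝ)) ∧
    (1 / (2 * Real.log 2)) *
        ∫ s in Ioi (0:ℝ), (f x - 2 * f (x - s) + f (x - 2 * s)) / s ^ 2 = deriv f x := by
  set F : ℝ → ℝ := fun s => (f x - 2 * f (x - s) + f (x - 2 * s)) / s ^ 2 with hFdef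
  set g : ℝ → ℝ := fun s => (f x - f (x - s)) / s ^ 2 with hgdef
  -- basic differentiability facts
  have hf1 : ContDiff ℝ 1 (deriv f) := by
    have h2 : (2 : WithTop ℕ∞) = 1 + 1 := by norm_num
    rw [h2] at hf
    exact (contDiff_succ_iff_deriv.mp hf).2.2
  have hdf : Differentiable ℝ f := hf.differentiable (by norm_num)
  have hdf' : Differentiable ℝ (deriv f) := hf1.differentiable one_ne_zero
  have hcf'' : Continuous (deriv (deriv f)) := hf1.continuous_deriv le_rfl
  -- bounds
  obtain ⟨M, hM⟩ := hsupp.exists_bound_of_continuous hf.continuous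
  obtain ⟨C, hC⟩ := (hsupp.deriv.deriv).exists_bound_of_continuous hcf''
  have hM0 : 0 ≤ M := le_trans (norm_nonneg _) (hM 0)
  have hC0 : 0 ≤ C := le_trans (norm_nonneg _) (hC 0)
  -- f' is C-Lipschitz
  have hlip : ∀ a c : ℝ, |deriv f a - deriv f c| ≤ C * |a - c| :=
    mvt_univ hdf' (fun y => by simpa [Real.norm_eq_abs] using hC y)
  -- second difference bound
  have key1 : ∀ s : ℝ, |f x - 2 * f (x - s) + f (x - 2 * s)| ≤ C * s ^ 2 := by
    intro s
    have hφ : Differentiable ℝ (fun y => f y - f (y - s)) :=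
      hdf.sub (hdf.comp (differentiable_id.sub_const s))
    have hφd : ∀ y, deriv (fun y => f y - f (y - s)) y = deriv f y - deriv f (y - s) := by
      intro y
      have hinner : HasDerivAt (fun y : ℝ => y - s) 1 y := (hasDerivAt_id y).sub_const s
      have hcomp := ((hdf (y - s)).hasDerivAt).comp y hinner
      have h := ((hdf y).hasDerivAt.sub hcomp).deriv
      simp only [Function.comp_apply, mul_one] at h
      exact h
    have hb : ∀ y : ℝ, |deriv (fun y => f y - f (y - s)) y| ≤ C * |s| := by
      intro y
      rw [hφd]
      simpa using hlip y (y - s)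
    have h := mvt_univ hφ hb x (x - s)
    have h2 : x - s - s = x - 2 * s := by ring
    rw [h2] at h
    have h3 : f x - f (x - s) - (f (x - s) - f (x - 2 * s)) = f x - 2 * f (x - s) + f (x - 2 * s) := by
      ring
    rw [h3] at h
    have h4 : x - (x - s) = s := by ring
    rw [h4] at h
    calc |f x - 2 * f (x - s) + f (x - 2 * s)| ≤ C * |s| * |s| := h
      _ = C * s ^ 2 := by rw [mul_assoc, abs_mul_abs_self, sq]
  -- Taylor bound
  have key2 : ∀ s : ℝ, 0 ≤ s → |f x - f (x - s) - s * deriv f x| ≤ C * s ^ 2 := by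
    intro s hs
    have hmem1 : x ∈ Icc (x - s) x := ⟨by linarith, le_rfl⟩
    have hmem2 : x - s ∈ Icc (x - s) x := ⟨le_rfl, by linarith⟩
    have hψd : ∀ y : ℝ, deriv (fun y => f y - y * deriv f x) y = deriv f y - deriv f x := by
      intro y
      have h := ((hdf y).hasDerivAt.sub ((hasDerivAt_id y).mul_const (deriv f x))).deriv
      simp only [id_eq, one_mul] at h
      exact h
    have h := Convex.norm_image_sub_le_of_norm_deriv_le
      (f := fun y => f y - y * deriv f x) (s := Icc (x - s) x)
      (fun y _ => (hdf y).sub (differentiableAt_id.mul_const _))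
      (C := C * s)
      (fun y hy => by
        rw [hψd, Real.norm_eq_abs]
        calc |deriv f y - deriv f x| ≤ C * |y - x| := hlip y x
          _ ≤ C * s := by
            apply mul_le_mul_of_nonneg_left _ hC0
            rw [abs_le]
            constructor <;> [linarith [hy.1]; linarith [hy.2]])
      (convex_Icc _ _) hmem2 hmem1
    rw [Real.norm_eq_abs, Real.norm_eq_abs] at h
    have h2 : f x - x * deriv f x - (f (x - s) - (x - s) * deriv f x)
        = f x - f (x - s) - s * deriv f x := by ring
    rw [h2] at h
    have h3 : x - (x - s) = s := by ring
    rw [h3, abs_of_nonneg hs] at h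
    calc |f x - f (x - s) - s * deriv f x| ≤ C * s * s := h
      _ = C * s ^ 2 := by ring
  -- measurability
  have hnum : Continuous fun s : ℝ => f x - 2 * f (x - s) + f (x - 2 * s) := by
    have := hf.continuous
    fun_prop
  have hFmeas : Measurable F := hnum.measurable.div ((continuous_pow 2).measurable)
  have hgnum : Continuous fun s : ℝ => f x - f (x - s) := by
    have := hf.continuous
    fun_prop
  have hgmeas : Measurable g := hgnum.measurable.div ((continuous_pow 2).measurable)
  -- rpow facts
  have hrpow : ∀ s : ℝ, 0 < s → s ^ (-2 : ℝ) = (s ^ 2)⁻¹ := by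
    intro s hs
    rw [Real.rpow_neg hs.le, ← Real.rpow_natCast s 2]
    norm_num
  -- integrability of F on Ioi 0
  have hFint : IntegrableOn F (Ioi 0) := by
    rw [← Ioc_union_Ioi_eq_Ioi (zero_le_one : (0:ℝ) ≤ 1)]
    refine IntegrableOn.union ?_ ?_
    · refine Integrable.mono'
        (show Integrable (fun _ : ℝ => C) (volume.restrict (Ioc (0:ℝ) 1)) from
          integrableOn_const measure_Ioc_lt_top.ne)
        hFmeas.aestronglyMeasurable.restrict ?_
      filter_upwards [ae_restrict_mem measurableSet_Ioc] with s hs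
      have hs0 : 0 < s := hs.1
      rw [Real.norm_eq_abs, hFdef]
      simp only
      rw [abs_div, abs_of_nonneg (sq_nonneg s)]
      rw [div_le_iff₀ (by positivity)]
      calc |f x - 2 * f (x - s) + f (x - 2 * s)| ≤ C * s ^ 2 := key1 s
        _ ≤ C * s ^ 2 := le_rfl
    · refine Integrable.mono'
        (((integrableOn_Ioi_rpow_of_lt (by norm_num : (-2:ℝ) < -1) one_pos)).const_mul (4 * M))
        hFmeas.aestronglyMeasurable.restrict ?_
      filter_upwards [ae_restrict_mem measurableSet_Ioi] with s hs
      have hs0 : (0:ℝ) < s := lt_trans one_pos hs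
      have h1 : |f x| ≤ M := by simpa [Real.norm_eq_abs] using hM x
      have h2 : |f (x - s)| ≤ M := by simpa [Real.norm_eq_abs] using hM (x - s)
      have h3 : |f (x - 2 * s)| ≤ M := by simpa [Real.norm_eq_abs] using hM (x - 2 * s)
      have hb : |f x - 2 * f (x - s) + f (x - 2 * s)| ≤ 4 * M := by
        rw [abs_le] at h1 h2 h3 ⊢
        constructor <;> [linarith [h1.1, h2.2, h3.1]; linarith [h1.2, h2.1, h3.2]]
      rw [Real.norm_eq_abs, hFdef]
      simp only
      rw [abs_div, abs_of_nonneg (sq_nonneg s), hrpow s hs0, ← div_eq_mul_inv]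
      exact div_le_div_of_nonneg_right hb (by positivity) |>.trans le_rfl
  -- integrability of g on Ioi c
  have hgint : ∀ c : ℝ, 0 < c → IntegrableOn g (Ioi c) := by
    intro c hc
    refine Integrable.mono'
      (((integrableOn_Ioi_rpow_of_lt (by norm_num : (-2:ℝ) < -1) hc)).const_mul (2 * M))
      hgmeas.aestronglyMeasurable.restrict ?_
    filter_upwards [ae_restrict_mem measurableSet_Ioi] with s hs
    have hs0 : (0:ℝ) < s := lt_trans hc hs
    have h1 : |f x| ≤ M := by simpa [Real.norm_eq_abs] using hM x
    have h2 : |f (x - s)| ≤ M := by simpa [Real.norm_eq_abs] using hM (x - s)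
    have hb : |f x - f (x - s)| ≤ 2 * M := by
      rw [abs_le] at h1 h2 ⊢
      constructor <;> [linarith [h1.1, h2.2]; linarith [h1.2, h2.1]]
    rw [Real.norm_eq_abs, hgdef]
    simp only
    rw [abs_div, abs_of_nonneg (sq_nonneg s), hrpow s hs0, ← div_eq_mul_inv]
    exact div_le_div_of_nonneg_right hb (by positivity)
  -- the key identity
  have hident : ∀ ε : ℝ, 0 < ε →
      ∫ s in Ioi ε, F s = 2 * ∫ s in Ioc ε (2 * ε), g s := by
    intro ε hε
    have hg1 := hgint ε hε
    have hg2 := hgint (2 * ε) (by linarith)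
    have hcomp : IntegrableOn (fun s => g (2 * s)) (Ioi ε) :=
      (integrableOn_Ioi_comp_mul_left_iff g ε two_pos).mpr hg2
    have heq : ∀ s ∈ Ioi ε, F s = 2 * g s - 4 * g (2 * s) := by
      intro s hs
      have hs0 : s ≠ 0 := ne_of_gt (lt_trans hε hs)
      rw [hFdef, hgdef]
      simp only
      field_simp
      ring
    have hsplit : ∫ s in Ioi ε, g s = (∫ s in Ioc ε (2 * ε), g s) + ∫ s in Ioi (2 * ε), g s := by
      rw [← setIntegral_union Ioc_disjoint_Ioi_same measurableSet_Ioi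
        (hg1.mono_set Ioc_subset_Ioi_self) hg2, Ioc_union_Ioi_eq_Ioi (by linarith)]
    have hci : ∫ s in Ioi ε, g (2 * s) = 2⁻¹ * ∫ s in Ioi (2 * ε), g s := by
      have := integral_comp_mul_left_Ioi g ε two_pos
      simpa [smul_eq_mul] using this
    calc ∫ s in Ioi ε, F s = ∫ s in Ioi ε, (2 * g s - 4 * g (2 * s)) :=
          setIntegral_congr_fun measurableSet_Ioi heq
      _ = (∫ s in Ioi ε, 2 * g s) - ∫ s in Ioi ε, 4 * g (2 * s) :=
          integral_sub (hg1.const_mul 2) (hcomp.const_mul 4)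
      _ = 2 * (∫ s in Ioi ε, g s) - 4 * ∫ s in Ioi ε, g (2 * s) := by
          rw [MeasureTheory.integral_const_mul, MeasureTheory.integral_const_mul]
      _ = 2 * ((∫ s in Ioc ε (2 * ε), g s) + ∫ s in Ioi (2 * ε), g s)
            - 4 * (2⁻¹ * ∫ s in Ioi (2 * ε), g s) := by rw [hsplit, hci]
      _ = 2 * ∫ s in Ioc ε (2 * ε), g s := by ring
  -- the near-zero estimate
  have hnear : ∀ ε : ℝ, 0 < ε →
      |(∫ s in Ioc ε (2 * ε), g s) - Real.log 2 * deriv f x| ≤ C * ε := by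
    intro ε hε
    set r : ℝ → ℝ := fun s => (f x - f (x - s) - s * deriv f x) / s ^ 2 with hrdef
    have hrmeas : Measurable r := by
      apply Measurable.div _ ((continuous_pow 2).measurable)
      have : Continuous fun s : ℝ => f x - f (x - s) - s * deriv f x := by
        have := hf.continuous
        fun_prop
      exact this.measurable
    have hgs : ∀ s ∈ Ioc ε (2 * ε), g s = deriv f x * (1 / s) + r s := by
      intro s hs
      have hs0 : s ≠ 0 := ne_of_gt (lt_trans hε hs.1)
      rw [hgdef, hrdef]
      simp only
      field_simp
      ring
    have hrbdd : ∀ s ∈ Ioc ε (2 * ε), ‖r s‖ ≤ C := by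
      intro s hs
      have hs0 : 0 < s := lt_trans hε hs.1
      rw [Real.norm_eq_abs, hrdef]
      simp only
      rw [abs_div, abs_of_nonneg (sq_nonneg s), div_le_iff₀ (by positivity)]
      exact key2 s hs0.le
    have hrint : IntegrableOn r (Ioc ε (2 * ε)) := by
      refine Integrable.mono'
        (show Integrable (fun _ : ℝ => C) (volume.restrict (Ioc ε (2 * ε))) from
          integrableOn_const measure_Ioc_lt_top.ne)
        hrmeas.aestronglyMeasurable.restrict ?_
      filter_upwards [ae_restrict_mem measurableSet_Ioc] with s hs
      exact hrbdd s hs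
    have hoint : IntegrableOn (fun s => deriv f x * (1 / s)) (Ioc ε (2 * ε)) := by
      exact (ContinuousOn.integrableOn_compact isCompact_Icc
        (continuousOn_const.mul (continuousOn_const.div continuousOn_id
          (fun s hs => ne_of_gt (lt_of_lt_of_le hε hs.1))))).mono_set Ioc_subset_Icc_self
    have hlogint : ∫ s in Ioc ε (2 * ε), (1 / s) = Real.log 2 := by
      rw [← intervalIntegral.integral_of_le (by linarith : ε ≤ 2 * ε)]
      rw [integral_one_div]
      · rw [mul_div_assoc, div_self (ne_of_gt hε), mul_one]
      · rw [Set.uIcc_of_le (by linarith : ε ≤ 2 * ε)]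
        rintro ⟨h0, _⟩
        linarith
    have hsplit : ∫ s in Ioc ε (2 * ε), g s
        = Real.log 2 * deriv f x + ∫ s in Ioc ε (2 * ε), r s := by
      rw [setIntegral_congr_fun measurableSet_Ioc hgs, integral_add hoint hrint,
        MeasureTheory.integral_const_mul, hlogint]
      ring
    rw [hsplit]
    have habs : |∫ s in Ioc ε (2 * ε), r s| ≤ C * ε := by
      have h := norm_setIntegral_le_of_norm_le_const (C := C)
        (measure_Ioc_lt_top : volume (Ioc ε (2 * ε)) < ⊤) hrbdd
      rw [Real.norm_eq_abs, measureReal_def] at h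
      have hvol : (volume (Ioc ε (2 * ε))).toReal = ε := by
        rw [Real.volume_Ioc, ENNReal.toReal_ofReal (by linarith)]
        ring
      rwa [hvol] at h
    have hq : Real.log 2 * deriv f x + (∫ s in Ioc ε (2 * ε), r s) - Real.log 2 * deriv f x
        = ∫ s in Ioc ε (2 * ε), r s := by ring
    rw [hq]
    exact habs
  -- the limiting argument
  set e : ℕ → ℝ := fun n => 1 / (n + 1) with hedef
  have hepos : ∀ n : ℕ, 0 < e n := fun n => by positivity
  have hmono : Monotone fun n : ℕ => Ioi (e n) := by
    intro m n hmn
    apply Ioi_subset_Ioi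
    apply one_div_le_one_div_of_le (by positivity)
    have : (m : ℝ) ≤ n := Nat.cast_le.mpr hmn
    linarith
  have hunion : (⋃ n : ℕ, Ioi (e n)) = Ioi (0:ℝ) := by
    ext y
    simp only [mem_iUnion, mem_Ioi]
    constructor
    · rintro ⟨n, hn⟩
      exact lt_trans (hepos n) hn
    · intro hy
      obtain ⟨n, hn⟩ := exists_nat_one_div_lt hy
      exact ⟨n, hn⟩
  have hlim1 : Filter.Tendsto (fun n => ∫ s in Ioi (e n), F s) Filter.atTop
      (nhds (∫ s in Ioi (0:ℝ), F s)) := by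
    have h := tendsto_setIntegral_of_monotone (fun n : ℕ => measurableSet_Ioi) hmono
      (by rw [hunion]; exact hFint)
    rwa [hunion] at h
  have he0 : Filter.Tendsto e Filter.atTop (nhds 0) := tendsto_one_div_add_atTop_nhds_zero_nat
  have hlim2 : Filter.Tendsto (fun n => ∫ s in Ioi (e n), F s) Filter.atTop
      (nhds (2 * (Real.log 2 * deriv f x))) := by
    have heq : (fun n => ∫ s in Ioi (e n), F s)
        = fun n => 2 * ∫ s in Ioc (e n) (2 * e n), g s := by
      funext n
      exact hident (e n) (hepos n)
    rw [heq]
    have h0 : Filter.Tendsto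
        (fun n => (∫ s in Ioc (e n) (2 * e n), g s) - Real.log 2 * deriv f x)
        Filter.atTop (nhds 0) := by
      refine squeeze_zero_norm (a := fun n => C * e n)
        (fun n => by simpa [Real.norm_eq_abs] using hnear (e n) (hepos n)) ?_
      have h2 := he0.const_mul C
      rw [mul_zero] at h2
      exact h2
    have h1 : Filter.Tendsto (fun n => ∫ s in Ioc (e n) (2 * e n), g s) Filter.atTop
        (nhds (Real.log 2 * deriv f x)) := by
      have := h0.add_const (Real.log 2 * deriv f x)
      simpa using this
    simpa using h1.const_mul 2
  have hkey : ∫ s in Ioi (0:ℝ), F s = 2 * (Real.log 2 * deriv f x) :=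
    tendsto_nhds_unique hlim1 hlim2
  refine ⟨hFint, ?_⟩
  rw [hkey]
  have hlog : Real.log 2 ≠ 0 := ne_of_gt (Real.log_pos one_lt_two)
  field_simp
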